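/- Let N ≥ 2 and let B = (b_{ij}) be an N×N skew-symmetric integer matrix. Set m_{k−1} := b_{k1} for k = 2, 3, …, N, and ε_{ij} := (m_i|m_j| − m_j|m_i|)/2 for 1 ≤ i, j ≤ N−1. Then μ₁(B) = ρ B ρ⁻¹ if and only if the following three conditions hold: (i) m_r = m_{N−r} for r = 1, 2, …, N−1; (ii) b_{ij} = m_{i−j} + ε_{1,i−j+1} + ε_{2,i−j+2} + ⋯ + ε_{j−1,i−1} for all N ≥ i > j ≥ 1; (iii) B is symmetric along the non-leading diagonal, i.e. b_{N−j+1,N−i+1} = b_{ij} for all i, j. -/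

import Mathlib

open Matrix

/-- The cyclic permutation matrix ρ: ρ_{i+1,i} = 1 (1-based), ρ_{1,N} = 1. -/
def rhoM (N : ℕ) : Matrix (Fin N) (Fin N) ℤ :=
  Matrix.of fun i j => if (i : ℕ) = ((j : ℕ) + 1) % N then 1 else 0

/-- The skew-rotation τ: equal to ρ except τ_{1,N} = −1. -/
def tauM (N : ℕ) : Matrix (Fin N) (Fin N) ℤ :=
  Matrix.of fun i j =>
    if (i : ℕ) = ((j : ℕ) + 1) % N then (if (j : ℕ) + 1 = N then -1 else 1) else 0

/-- Fomin–Zelevinsky matrix mutation at node `k`. -/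
def mutB {N : ℕ} (k : Fin N) (B : Matrix (Fin N) (Fin N) ℤ) : Matrix (Fin N) (Fin N) ℤ :=
  Matrix.of fun i j =>
    if i = k ∨ j = k then -B i j
    else B i j + (|B i k| * B k j + B i k * |B k j|) / 2

/-- Node `k` is a sink of `B` if all entries of column `k` are nonnegative. -/
def IsSink {N : ℕ} (k : Fin N) (B : Matrix (Fin N) (Fin N) ℤ) : Prop :=
  ∀ i, 0 ≤ B i k


lemma two_dvd_epsNum (x y : ℤ) : 2 ∣ (x * |y| - y * |x|) := by
  rcases abs_choice x with h | h <;> rcases abs_choice y with h' | h' <;> rw [h, h']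
  · exact ⟨0, by ring⟩
  · exact ⟨-(x * y), by ring⟩
  · exact ⟨x * y, by ring⟩
  · exact ⟨0, by ring⟩

lemma epsNum_antisym (x y : ℤ) : (y * |x| - x * |y|) / 2 = -((x * |y| - y * |x|) / 2) := by
  obtain ⟨c, hc⟩ := two_dvd_epsNum x y
  omega

lemma rho_mul_rhoT (N : ℕ) (hN : 2 ≤ N) : rhoM N * (rhoM N)ᵀ = 1 := by
  ext a b
  rw [Matrix.mul_apply]
  have hb : (b : ℕ) < N := b.isLt
  rw [Fintype.sum_eq_single (⟨((a : ℕ) + (N - 1)) % N, Nat.mod_lt _ (by omega)⟩ : Fin N)]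
  · have h1 : ((((a : ℕ) + (N - 1)) % N) + 1) % N = (a : ℕ) := by
      rw [Nat.mod_add_mod]
      have : (a : ℕ) + (N - 1) + 1 = (a : ℕ) + N := by omega
      rw [this, Nat.add_mod_right, Nat.mod_eq_of_lt a.isLt]
    simp only [rhoM, Matrix.of_apply, Matrix.transpose_apply, Matrix.one_apply, h1]
    rw [if_true]
    by_cases h : a = b
    · subst h; rw [if_pos rfl, if_pos rfl]; ring
    · rw [if_neg (by simpa [Fin.ext_iff, eq_comm] using h), if_neg h]; ring
  · intro k hk
    have : (a : ℕ) ≠ ((k : ℕ) + 1) % N := by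
      intro h
      apply hk
      have hk' : (k : ℕ) < N := k.isLt
      apply Fin.ext
      simp only
      rcases Nat.lt_or_ge ((k : ℕ) + 1) N with h2 | h2
      · rw [Nat.mod_eq_of_lt h2] at h
        have : ((k : ℕ) + 1 + (N - 1)) % N = (k : ℕ) := by
          have : (k : ℕ) + 1 + (N - 1) = (k : ℕ) + N := by omega
          rw [this, Nat.add_mod_right, Nat.mod_eq_of_lt hk']
        rw [h, this]
      · have hkN : (k : ℕ) + 1 = N := by omega
        rw [hkN, Nat.mod_self] at h
        rw [h]
        have hk2 : (k : ℕ) = N - 1 := by omega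
        rw [hk2, Nat.zero_add, Nat.mod_eq_of_lt (by omega)]
    simp [rhoM, this]

lemma mutB_zero_left {N : ℕ} (hN1 : 0 < N) (B : Matrix (Fin N) (Fin N) ℤ) (j : Fin N) :
    mutB ⟨0, hN1⟩ B ⟨0, hN1⟩ j = -B ⟨0, hN1⟩ j := by
  simp [mutB]

lemma mutB_zero_right {N : ℕ} (hN1 : 0 < N) (B : Matrix (Fin N) (Fin N) ℤ) (i : Fin N) :
    mutB ⟨0, hN1⟩ B i ⟨0, hN1⟩ = -B i ⟨0, hN1⟩ := by
  simp [mutB]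

lemma mutB_pos {N : ℕ} (hN1 : 0 < N) (B : Matrix (Fin N) (Fin N) ℤ) (i j : Fin N)
    (hi : i ≠ ⟨0, hN1⟩) (hj : j ≠ ⟨0, hN1⟩) :
    mutB ⟨0, hN1⟩ B i j =
      B i j + (|B i ⟨0, hN1⟩| * B ⟨0, hN1⟩ j + B i ⟨0, hN1⟩ * |B ⟨0, hN1⟩ j|) / 2 := by
  simp [mutB, hi, hj]

set_option maxHeartbeats 2000000 in
/-- The general period 1 solution: with `m_{k−1} = b_{k1}` and
`ε_{ij} = (m_i|m_j| − m_j|m_i|)/2`, the matrix `B` satisfies `μ₁ B = ρ B ρ⁻¹` iff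
(i) `m_r = m_{N−r}`, (ii) `b_{ij} = m_{i−j} + Σ_{s=1}^{j−1} ε_{s,i−j+s}` for `i > j`,
and (iii) `B` is symmetric along the non-leading diagonal. -/
theorem stmt10 (N : ℕ) (hN : 2 ≤ N) (B : Matrix (Fin N) (Fin N) ℤ)
    (hskew : Bᵀ = -B)
    (m : ℕ → ℤ) (hm : ∀ j (h1 : 1 ≤ j) (h2 : j ≤ N - 1), m j = B ⟨j, by omega⟩ ⟨0, by omega⟩)
    (eps : ℕ → ℕ → ℤ)
    (heps : ∀ i j, eps i j = (m i * |m j| - m j * |m i|) / 2) :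
    mutB ⟨0, by omega⟩ B = rhoM N * B * (rhoM N)⁻¹ ↔
      ((∀ r, 1 ≤ r → r ≤ N - 1 → m r = m (N - r)) ∧
       (∀ i j : Fin N, (j : ℕ) < (i : ℕ) →
          B i j = m ((i : ℕ) - (j : ℕ)) +
            ∑ s ∈ Finset.Icc 1 (j : ℕ), eps s ((i : ℕ) - (j : ℕ) + s)) ∧
       (∀ i j : Fin N,
          B ⟨N - 1 - (j : ℕ), by omega⟩ ⟨N - 1 - (i : ℕ), by omega⟩ = B i j)) := by
  have hN1 : 0 < N := by omega
  have hsk : ∀ i j : Fin N, B j i = -B i j := by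
    intro i j
    have h := congrFun (congrFun hskew i) j
    simpa using h
  have hdiag : ∀ i : Fin N, B i i = 0 := by intro i; have := hsk i i; omega
  have hepsA : ∀ a b, eps a b = -eps b a := by
    intro a b; rw [heps, heps]; exact (epsNum_antisym (m b) (m a))
  have heps0 : ∀ a, eps a a = 0 := by intro a; rw [heps]; simp
  have hcol : ∀ (k : ℕ) (h1 : 1 ≤ k) (h2 : k < N), B ⟨k, h2⟩ ⟨0, hN1⟩ = m k := by
    intro k h1 h2; exact (hm k h1 (by omega)).symm
  have hrow : ∀ (k : ℕ) (h1 : 1 ≤ k) (h2 : k < N), B ⟨0, hN1⟩ ⟨k, h2⟩ = -m k := by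
    intro k h1 h2; rw [hsk ⟨k, h2⟩ ⟨0, hN1⟩, hcol k h1 h2]
  have pair_sum : ∀ (d p q : ℕ), 1 ≤ p → 1 ≤ d → p + q + d = N →
      (∀ s, p ≤ s → s ≤ q → m (d + s) = m (p + q - s)) →
      ∑ s ∈ Finset.Icc p q, eps s (d + s) = 0 := by
    intro d p q hp hd hpq hsym
    apply Finset.sum_involution (g := fun s _ => p + q - s)
    · intro a ha
      rw [Finset.mem_Icc] at ha
      have e1 : m (d + a) = m (p + q - a) := hsym a ha.1 ha.2
      have e2 : m (d + (p + q - a)) = m a := by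
        have h := hsym (p + q - a) (by omega) (by omega)
        rwa [show p + q - (p + q - a) = a from by omega] at h
      rw [heps, heps, e1, e2, epsNum_antisym (m a) (m (p + q - a))]
      ring
    · intro a ha hne
      rw [Finset.mem_Icc] at ha
      intro hga
      apply hne
      have e1 : m (d + a) = m a := by rw [hsym a ha.1 ha.2, hga]
      rw [heps, e1]
      simp
    · intro a ha; rw [Finset.mem_Icc] at ha ⊢; omega
    · intro a ha; rw [Finset.mem_Icc] at ha; omega
  have hinv : (rhoM N)⁻¹ = (rhoM N)ᵀ := Matrix.inv_eq_right_inv (rho_mul_rhoT N hN)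
  have hmodlt : ∀ a : ℕ, (a + 1) % N < N := fun a => Nat.mod_lt _ (by omega)
  have hmodinj : ∀ x y : ℕ, x < N → y < N → (x + 1) % N = (y + 1) % N → x = y := by
    intro x y hx hy h
    rcases Nat.lt_or_ge (x + 1) N with h1 | h1 <;> rcases Nat.lt_or_ge (y + 1) N with h2 | h2
    · rw [Nat.mod_eq_of_lt h1, Nat.mod_eq_of_lt h2] at h; omega
    · rw [Nat.mod_eq_of_lt h1, show y + 1 = N from by omega, Nat.mod_self] at h; omega
    · rw [show x + 1 = N from by omega, Nat.mod_self, Nat.mod_eq_of_lt h2] at h; omega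
    · omega
  have hone : ∀ (a : ℕ) (ha : a < N) (k : Fin N),
      rhoM N ⟨(a + 1) % N, hmodlt a⟩ k = if k = (⟨a, ha⟩ : Fin N) then 1 else 0 := by
    intro a ha k
    simp only [rhoM, Matrix.of_apply]
    by_cases h : k = (⟨a, ha⟩ : Fin N)
    · subst h; rw [if_pos rfl, if_pos rfl]
    · rw [if_neg, if_neg h]
      intro hc
      exact h (Fin.ext (hmodinj (k : ℕ) a k.isLt ha hc.symm))
  have key : ∀ (a b : ℕ) (ha : a < N) (hb : b < N),
      (rhoM N * B * (rhoM N)⁻¹) ⟨(a + 1) % N, hmodlt a⟩ ⟨(b + 1) % N, hmodlt b⟩ =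
        B ⟨a, ha⟩ ⟨b, hb⟩ := by
    intro a b ha hb
    rw [hinv, Matrix.mul_apply]
    have hrowB : ∀ l : Fin N, (rhoM N * B) ⟨(a + 1) % N, hmodlt a⟩ l = B ⟨a, ha⟩ l := by
      intro l
      rw [Matrix.mul_apply]
      rw [Fintype.sum_eq_single (⟨a, ha⟩ : Fin N)]
      · rw [hone a ha, if_pos rfl, one_mul]
      · intro k hk; rw [hone a ha, if_neg hk, zero_mul]
    simp only [hrowB, Matrix.transpose_apply]
    rw [Fintype.sum_eq_single (⟨b, hb⟩ : Fin N)]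
    · rw [hone b hb, if_pos rfl, mul_one]
    · intro k hk; rw [hone b hb, if_neg hk, mul_zero]
  have hP : (mutB ⟨0, hN1⟩ B = rhoM N * B * (rhoM N)⁻¹) ↔
      (∀ (a b : ℕ) (ha : a < N) (hb : b < N),
        mutB ⟨0, hN1⟩ B ⟨(a + 1) % N, hmodlt a⟩ ⟨(b + 1) % N, hmodlt b⟩ = B ⟨a, ha⟩ ⟨b, hb⟩) := by
    constructor
    · intro h a b ha hb; rw [h]; exact key a b ha hb
    · intro h
      ext i j
      have ei : i = ⟨(((i : ℕ) + (N - 1)) % N + 1) % N, hmodlt _⟩ := by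
        apply Fin.ext
        simp only
        rw [Nat.mod_add_mod, show ((i : ℕ) + (N - 1) + 1) = (i : ℕ) + N from by omega,
          Nat.add_mod_right, Nat.mod_eq_of_lt i.isLt]
      have ej : j = ⟨(((j : ℕ) + (N - 1)) % N + 1) % N, hmodlt _⟩ := by
        apply Fin.ext
        simp only
        rw [Nat.mod_add_mod, show ((j : ℕ) + (N - 1) + 1) = (j : ℕ) + N from by omega,
          Nat.add_mod_right, Nat.mod_eq_of_lt j.isLt]
      rw [ei, ej]
      exact (h _ _ (Nat.mod_lt _ (by omega)) (Nat.mod_lt _ (by omega))).trans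
        (key _ _ _ _).symm
  rw [hP]
  constructor
  · -- forward direction
    intro hp
    have hlast : ∀ (t : ℕ) (ht : t < N - 1), B ⟨N - 1, by omega⟩ ⟨t, by omega⟩ = m (t + 1) := by
      intro t ht
      have h0 := hp (N - 1) t (by omega) (by omega)
      have eA : (⟨(N - 1 + 1) % N, hmodlt (N - 1)⟩ : Fin N) = ⟨0, hN1⟩ := by
        apply Fin.ext
        simp only
        rw [show N - 1 + 1 = N from by omega, Nat.mod_self]
      have eB : (⟨(t + 1) % N, hmodlt t⟩ : Fin N) = ⟨t + 1, by omega⟩ :=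
        Fin.ext (Nat.mod_eq_of_lt (by omega))
      rw [eA, eB, mutB_zero_left] at h0
      rw [hrow (t + 1) (by omega) (by omega), neg_neg] at h0
      exact h0.symm
    have hrec : ∀ (a b : ℕ) (ha : a < N - 1) (hb : b < N - 1),
        B ⟨a, by omega⟩ ⟨b, by omega⟩ =
          B ⟨a + 1, by omega⟩ ⟨b + 1, by omega⟩ + eps (a + 1) (b + 1) := by
      intro a b ha hb
      have h0 := hp a b (by omega) (by omega)
      have hlta : a + 1 < N := by omega
      have hltb : b + 1 < N := by omega
      have eA : (⟨(a + 1) % N, hmodlt a⟩ : Fin N) = ⟨a + 1, hlta⟩ :=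
        Fin.ext (Nat.mod_eq_of_lt (by omega))
      have eB : (⟨(b + 1) % N, hmodlt b⟩ : Fin N) = ⟨b + 1, hltb⟩ :=
        Fin.ext (Nat.mod_eq_of_lt (by omega))
      rw [eA, eB, mutB_pos hN1 B ⟨a + 1, hlta⟩ ⟨b + 1, hltb⟩
        (by simp [Fin.ext_iff]) (by simp [Fin.ext_iff])] at h0
      rw [hcol (a + 1) (by omega) hlta, hrow (b + 1) (by omega) hltb] at h0
      have hd : (|m (a + 1)| * -m (b + 1) + m (a + 1) * |-m (b + 1)|) / 2 =
          eps (a + 1) (b + 1) := by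
        rw [heps]
        congr 1
        rw [abs_neg]
        ring
      rw [hd] at h0
      exact h0.symm
    have hii : ∀ (b a : ℕ) (ha : a < N) (hb : b < a),
        B ⟨a, ha⟩ ⟨b, by omega⟩ =
          m (a - b) + ∑ s ∈ Finset.Icc 1 b, eps s (a - b + s) := by
      intro b
      induction b with
      | zero =>
        intro a ha hb
        simp only [Nat.sub_zero, Finset.Icc_eq_empty (by omega : ¬(1:ℕ) ≤ 0),
          Finset.sum_empty, add_zero]
        exact hcol a (by omega) ha
      | succ b ih =>
        intro a ha hb
        have h1 := hrec (a - 1) b (by omega) (by omega)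
        have e2 : (⟨a - 1 + 1, by omega⟩ : Fin N) = ⟨a, ha⟩ := by
          apply Fin.ext
          show a - 1 + 1 = a
          omega
        rw [e2] at h1
        have h2 := ih (a - 1) (by omega) (by omega)
        rw [h2] at h1
        have e4 : a - 1 - b = a - (b + 1) := by omega
        rw [e4] at h1
        have e5 : a - 1 + 1 = a := by omega
        rw [e5] at h1
        rw [Finset.sum_Icc_succ_top (by omega : 1 ≤ b + 1)]
        have e3 : a - (b + 1) + (b + 1) = a := by omega
        rw [e3]
        have e6 : eps (b + 1) a = -eps a (b + 1) := hepsA (b + 1) a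
        rw [e6]
        linarith [h1]
    have hi1 : ∀ r, 1 ≤ r → r ≤ N - 1 → m r = m (N - r) := by
      intro r
      induction r using Nat.strong_induction_on with
      | _ r ih =>
        intro hr1 hr2
        have hL := hlast (r - 1) (by omega)
        rw [show r - 1 + 1 = r from by omega] at hL
        have hI := hii (r - 1) (N - 1) (by omega) (by omega)
        have hS : ∑ s ∈ Finset.Icc 1 (r - 1), eps s (N - 1 - (r - 1) + s) = 0 := by
          rcases Nat.eq_or_lt_of_le hr1 with h | h
          · rw [show r - 1 = 0 from by omega]
            simp
          · have hps := pair_sum (N - r) 1 (r - 1) (by omega) (by omega) (by omega) ?_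
            · rwa [show N - 1 - (r - 1) = N - r from by omega]
            · intro s hs1 hs2
              have hih := ih (r - s) (by omega) (by omega) (by omega)
              rw [show N - (r - s) = N - r + s from by omega] at hih
              rw [show 1 + (r - 1) - s = r - s from by omega]
              exact hih.symm
        rw [hS, add_zero, show N - 1 - (r - 1) = N - r from by omega] at hI
        exact hL.symm.trans hI
    have hgt : ∀ i j : Fin N, (j : ℕ) < (i : ℕ) →
        B ⟨N - 1 - (j : ℕ), by omega⟩ ⟨N - 1 - (i : ℕ), by omega⟩ = B i j := by
      intro i j hji
      have hiN : (i : ℕ) < N := i.isLt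
      have hL := hii (N - 1 - (i : ℕ)) (N - 1 - (j : ℕ)) (by omega) (by omega)
      have hR := hii (j : ℕ) (i : ℕ) i.isLt hji
      have eI : (⟨(i : ℕ), i.isLt⟩ : Fin N) = i := rfl
      have ed : N - 1 - (j : ℕ) - (N - 1 - (i : ℕ)) = (i : ℕ) - (j : ℕ) := by omega
      rw [ed] at hL
      -- show the two sums agree
      have hsplit : ∀ u v : ℕ, u ≤ v → u + v + ((i : ℕ) - (j : ℕ)) + 1 = N →
          ∑ s ∈ Finset.Icc 1 v, eps s ((i : ℕ) - (j : ℕ) + s) =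
          ∑ s ∈ Finset.Icc 1 u, eps s ((i : ℕ) - (j : ℕ) + s) := by
        intro u v huv hN'
        have hz : ∑ s ∈ Finset.Icc (u + 1) v, eps s ((i : ℕ) - (j : ℕ) + s) = 0 := by
          apply pair_sum ((i : ℕ) - (j : ℕ)) (u + 1) v (by omega) (by omega) (by omega)
          intro s hs1 hs2
          have h1 := hi1 ((i : ℕ) - (j : ℕ) + s) (by omega) (by omega)
          rw [h1, show N - ((i : ℕ) - (j : ℕ) + s) = u + 1 + v - s from by omega]
        have hc : ∑ s ∈ Finset.Icc 1 v, eps s ((i : ℕ) - (j : ℕ) + s) =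
            ∑ s ∈ Finset.Icc 1 u, eps s ((i : ℕ) - (j : ℕ) + s) +
            ∑ s ∈ Finset.Icc (u + 1) v, eps s ((i : ℕ) - (j : ℕ) + s) := by
          rw [show (1 : ℕ) = 0 + 1 from rfl, Finset.Icc_add_one_left_eq_Ioc, Finset.Icc_add_one_left_eq_Ioc,
            Nat.zero_add, Finset.Icc_add_one_left_eq_Ioc]
          exact (Finset.sum_Ioc_consecutive _ (by omega) (by omega)).symm
        rw [hc, hz, add_zero]
      have hsums : ∑ s ∈ Finset.Icc 1 (N - 1 - (i : ℕ)), eps s ((i : ℕ) - (j : ℕ) + s) =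
          ∑ s ∈ Finset.Icc 1 (j : ℕ), eps s ((i : ℕ) - (j : ℕ) + s) := by
        rcases Nat.le_total (N - 1 - (i : ℕ)) (j : ℕ) with h | h
        · rw [hsplit (N - 1 - (i : ℕ)) (j : ℕ) h (by omega)]
        · rw [hsplit (j : ℕ) (N - 1 - (i : ℕ)) h (by omega)]
      rw [hL, hsums, ← hR]
    refine ⟨hi1, ?_, ?_⟩
    · intro i j hji
      have h := hii (j : ℕ) (i : ℕ) i.isLt hji
      exact h
    · intro i j
      rcases lt_trichotomy ((j : ℕ)) ((i : ℕ)) with h | h | h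
      · exact hgt i j h
      · have eIJ : i = j := Fin.ext h.symm
        subst eIJ
        rw [hdiag, hdiag]
      · have h1 := hgt j i h
        rw [hsk j i, ← h1]
        exact hsk _ _
  · -- backward direction
    rintro ⟨h1, h2, h3⟩
    have hii' : ∀ (a b : ℕ) (ha : a < N) (hb : b < a),
        B ⟨a, ha⟩ ⟨b, by omega⟩ =
          m (a - b) + ∑ s ∈ Finset.Icc 1 b, eps s (a - b + s) := by
      intro a b ha hb
      exact h2 ⟨a, ha⟩ ⟨b, by omega⟩ hb
    have hzsum : ∀ (d p q : ℕ), 1 ≤ p → 1 ≤ d → p + q + d = N →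
        ∑ s ∈ Finset.Icc p q, eps s (d + s) = 0 := by
      intro d p q hp hd hpq
      apply pair_sum d p q hp hd hpq
      intro s hs1 hs2
      have h := h1 (d + s) (by omega) (by omega)
      rw [h, show N - (d + s) = p + q - s from by omega]
    have hlast' : ∀ (t : ℕ) (ht : t < N - 1), B ⟨N - 1, by omega⟩ ⟨t, by omega⟩ = m (t + 1) := by
      intro t ht
      have h := hii' (N - 1) t (by omega) (by omega)
      rw [show N - 1 - t = N - (t + 1) from by omega] at h
      have hz : ∑ s ∈ Finset.Icc 1 t, eps s (N - (t + 1) + s) = 0 :=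
        hzsum (N - (t + 1)) 1 t (by omega) (by omega) (by omega)
      rw [hz, add_zero] at h
      rw [h, ← h1 (t + 1) (by omega) (by omega)]
    have hstep : ∀ (a b : ℕ) (ha : a < N - 1) (hb : b < a),
        B ⟨a, by omega⟩ ⟨b, by omega⟩ =
          B ⟨a + 1, by omega⟩ ⟨b + 1, by omega⟩ + eps (a + 1) (b + 1) := by
      intro a b ha hb
      have hA := hii' a b (by omega) hb
      have hB := hii' (a + 1) (b + 1) (by omega) (by omega)
      rw [show a + 1 - (b + 1) = a - b from by omega] at hB
      rw [Finset.sum_Icc_succ_top (by omega : 1 ≤ b + 1)] at hB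
      rw [show a - b + (b + 1) = a + 1 from by omega] at hB
      rw [hepsA (b + 1) (a + 1)] at hB
      rw [hA, hB]
      ring
    intro a b ha hb
    by_cases hA : a = N - 1 <;> by_cases hB : b = N - 1
    · subst hA; subst hB
      have eA : (⟨(N - 1 + 1) % N, hmodlt (N - 1)⟩ : Fin N) = ⟨0, hN1⟩ := by
        apply Fin.ext
        simp only
        rw [show N - 1 + 1 = N from by omega, Nat.mod_self]
      rw [eA, mutB_zero_left, hdiag, hdiag]
      ring
    · subst hA
      have eA : (⟨(N - 1 + 1) % N, hmodlt (N - 1)⟩ : Fin N) = ⟨0, hN1⟩ := by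
        apply Fin.ext
        simp only
        rw [show N - 1 + 1 = N from by omega, Nat.mod_self]
      have eB : (⟨(b + 1) % N, hmodlt b⟩ : Fin N) = ⟨b + 1, by omega⟩ :=
        Fin.ext (Nat.mod_eq_of_lt (by omega))
      rw [eA, eB, mutB_zero_left, hrow (b + 1) (by omega) (by omega), neg_neg,
        hlast' b (by omega)]
    · subst hB
      have eA : (⟨(a + 1) % N, hmodlt a⟩ : Fin N) = ⟨a + 1, by omega⟩ :=
        Fin.ext (Nat.mod_eq_of_lt (by omega))
      have eB : (⟨(N - 1 + 1) % N, hmodlt (N - 1)⟩ : Fin N) = ⟨0, hN1⟩ := by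
        apply Fin.ext
        simp only
        rw [show N - 1 + 1 = N from by omega, Nat.mod_self]
      rw [eA, eB, mutB_zero_right, hcol (a + 1) (by omega) (by omega)]
      rw [hsk ⟨N - 1, by omega⟩ ⟨a, ha⟩, hlast' a (by omega)]
    · have hlta : a + 1 < N := by omega
      have hltb : b + 1 < N := by omega
      have eA : (⟨(a + 1) % N, hmodlt a⟩ : Fin N) = ⟨a + 1, hlta⟩ :=
        Fin.ext (Nat.mod_eq_of_lt (by omega))
      have eB : (⟨(b + 1) % N, hmodlt b⟩ : Fin N) = ⟨b + 1, hltb⟩ :=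
        Fin.ext (Nat.mod_eq_of_lt (by omega))
      rw [eA, eB, mutB_pos hN1 B ⟨a + 1, hlta⟩ ⟨b + 1, hltb⟩
        (by simp [Fin.ext_iff]) (by simp [Fin.ext_iff])]
      rw [hcol (a + 1) (by omega) hlta, hrow (b + 1) (by omega) hltb]
      have hd : (|m (a + 1)| * -m (b + 1) + m (a + 1) * |-m (b + 1)|) / 2 =
          eps (a + 1) (b + 1) := by
        rw [heps]
        congr 1
        rw [abs_neg]
        ring
      rw [hd]
      rcases lt_trichotomy b a with h | h | h
      · exact (hstep a b (by omega) h).symm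
      · subst h
        rw [hdiag, hdiag, heps0]
        ring
      · rw [hsk ⟨b + 1, by omega⟩ ⟨a + 1, by omega⟩, hsk ⟨b, by omega⟩ ⟨a, by omega⟩]
        have hs := hstep b a (by omega) h
        rw [hs, hepsA (b + 1) (a + 1)]
        ring
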